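/- Let U₁,…,U₈ be words over an alphabet with involutive reversal satisfying the non-interleaved double-chain equations U₁ = U₅⁻¹, U₃ = U₇⁻¹, U₂U₃U₄ = U₈⁻¹U₇⁻¹U₆⁻¹, and U₄U₅U₆ = U₂⁻¹U₁⁻¹U₈⁻¹, and suppose |U₂| > |U₄|. Then there exist nonempty words X, Y such that U₂ = U₈⁻¹X, U₆ = U₄⁻¹Y, X and Y⁻¹ are anagrams of each other (hence XY is balanced), and Y⁻¹X⁻¹ occurs as a subword of the concatenation U₂U₃U₄U₅U₆. -/
import Mathlib


/-- Letterwise reversal of a word over an alphabet with reversal `inv`. -/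
def wrev {A : Type*} (inv : A → A) (W : List A) : List A := (W.map inv).reverse

lemma wrev_append {A : Type*} (inv : A → A) (a b : List A) :
    wrev inv (a ++ b) = wrev inv b ++ wrev inv a := by
  simp [wrev]

lemma length_wrev {A : Type*} (inv : A → A) (a : List A) :
    (wrev inv a).length = a.length := by
  simp [wrev]

lemma wrev_wrev {A : Type*} {inv : A → A} (hinv : Function.Involutive inv) (a : List A) :
    wrev inv (wrev inv a) = a := by
  simp [wrev, List.map_reverse, List.map_map, hinv.comp_self]

lemma wrev_perm_wrev {A : Type*} (inv : A → A) {a b : List A} (h : a.Perm b) :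
    (wrev inv a).Perm (wrev inv b) := by
  unfold wrev
  exact ((List.reverse_perm _).trans (h.map inv)).trans (List.reverse_perm _).symm

theorem stmt6 {A : Type*} (inv : A → A) (hinv : Function.Involutive inv)
    (U1 U2 U3 U4 U5 U6 U7 U8 : List A)
    (h1 : U1 = wrev inv U5) (h3 : U3 = wrev inv U7)
    (h24 : U2 ++ U3 ++ U4 = wrev inv (U6 ++ U7 ++ U8))
    (h46 : U4 ++ U5 ++ U6 = wrev inv (U8 ++ U1 ++ U2))
    (hlen : U4.length < U2.length) :
    ∃ X Y : List A, X ≠ [] ∧ Y ≠ [] ∧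
      U2 = wrev inv U8 ++ X ∧ U6 = wrev inv U4 ++ Y ∧
      X.Perm (wrev inv Y) ∧
      (X ++ Y).Perm (wrev inv (X ++ Y)) ∧
      (wrev inv Y ++ wrev inv X) <:+: (U2 ++ U3 ++ U4 ++ U5 ++ U6) := by
  -- rewrite the chain equations
  have h7 : wrev inv U7 = U3 := h3.symm
  have h24' : U2 ++ (U3 ++ U4) = wrev inv U8 ++ (U3 ++ wrev inv U6) := by
    rw [wrev_append, wrev_append] at h24
    simpa [h7, List.append_assoc] using h24
  have h46' : U4 ++ U5 ++ U6 = wrev inv U2 ++ (U5 ++ wrev inv U8) := by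
    rw [wrev_append, wrev_append] at h46
    have h5 : wrev inv U1 = U5 := by rw [h1, wrev_wrev hinv]
    simpa [h5, List.append_assoc] using h46
  -- length facts
  have hl8 : U8.length < U2.length := by
    have e1 := congrArg List.length h24'
    have e2 := congrArg List.length h46'
    simp [length_wrev] at e1 e2
    omega
  -- extract X : U2 = wrev U8 ++ X
  set X : List A := U2.drop U8.length with hX
  have ht : U2.take U8.length = wrev inv U8 := by
    have h := congrArg (List.take U8.length) h24'
    rwa [List.take_append_of_le_length hl8.le,
      List.take_left' (length_wrev inv U8)] at h
  have hU2 : U2 = wrev inv U8 ++ X := by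
    conv_lhs => rw [← List.take_append_drop U8.length U2]
    rw [ht]
  have hXlen : X.length = U2.length - U8.length := by simp [hX]
  have hXlen0 : X.length ≠ 0 := by rw [hXlen]; omega
  have hXne : X ≠ [] := fun h => hXlen0 (by simp [h])
  -- cancel wrev U8 in h24'
  have key1 : X ++ (U3 ++ U4) = U3 ++ wrev inv U6 := by
    have := h24'
    rw [hU2, List.append_assoc] at this
    exact List.append_cancel_left this
  -- split wrev U6 = W ++ U4 with X ++ U3 = U3 ++ W
  set W : List A := (wrev inv U6).take X.length with hW
  have hlen6 : (wrev inv U6).length = X.length + U4.length := by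
    have := congrArg List.length key1
    simp [length_wrev] at this ⊢
    omega
  have hsplit : X ++ U3 = U3 ++ W ∧ U4 = (wrev inv U6).drop X.length := by
    have heq : (X ++ U3) ++ U4 = (U3 ++ W) ++ (wrev inv U6).drop X.length := by
      rw [List.append_assoc, key1, hW, List.append_assoc, List.take_append_drop]
    exact List.append_inj' heq (by simp [hlen6])
  have hXU3 : X ++ U3 = U3 ++ W := hsplit.1
  have hW6 : wrev inv U6 = W ++ U4 := by
    rw [hW, hsplit.2, List.take_append_drop]
  set Y : List A := wrev inv W with hY
  have hWY : wrev inv Y = W := wrev_wrev hinv W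
  have hU6 : U6 = wrev inv U4 ++ Y := by
    have := congrArg (wrev inv) hW6
    rw [wrev_wrev hinv, wrev_append] at this
    exact this
  have hWlen : W.length = X.length := by simp [hW, hlen6]
  have hYlen : Y.length = X.length := by rw [hY, length_wrev, hWlen]
  have hYne : Y ≠ [] := fun h => hXlen0 (by rw [← hYlen, h]; simp)
  -- permutation facts
  have hpermXW : X.Perm W := by
    have h' : (X ++ U3).Perm (U3 ++ W) := by rw [hXU3]
    exact (List.perm_append_right_iff U3).mp (h'.trans List.perm_append_comm)
  have hpermX : X.Perm (wrev inv Y) := hWY ▸ hpermXW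
  have hpermYX : Y.Perm (wrev inv X) := by
    have h' := wrev_perm_wrev inv hpermXW
    rw [← hY] at h'
    exact h'.symm
  have hperm2 : (X ++ Y).Perm (wrev inv (X ++ Y)) := by
    rw [wrev_append]
    exact hpermX.append hpermYX
  -- the infix
  refine ⟨X, Y, hXne, hYne, hU2, hU6, hpermX, hperm2, ?_⟩
  have hU2' : wrev inv U2 = wrev inv X ++ U8 := by
    rw [hU2, wrev_append, wrev_wrev hinv]
  have h46'' : U4 ++ U5 ++ U6 = wrev inv X ++ (U8 ++ (U5 ++ wrev inv U8)) := by
    rw [h46', hU2', List.append_assoc]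
  refine ⟨wrev inv U8 ++ U3, U8 ++ (U5 ++ wrev inv U8), ?_⟩
  rw [hWY]
  calc (wrev inv U8 ++ U3) ++ (W ++ wrev inv X) ++ (U8 ++ (U5 ++ wrev inv U8))
      = wrev inv U8 ++ ((U3 ++ W) ++ (wrev inv X ++ (U8 ++ (U5 ++ wrev inv U8)))) := by
        simp [List.append_assoc]
    _ = wrev inv U8 ++ ((X ++ U3) ++ (U4 ++ U5 ++ U6)) := by rw [← hXU3, ← h46'']
    _ = U2 ++ U3 ++ U4 ++ U5 ++ U6 := by rw [hU2]; simp [List.append_assoc]
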